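/- Let J be an n×n real matrix with spectral radius ρ(J) < 1 such that every principal submatrix of J also has spectral radius < 1. Then I − J is a P-matrix. -/

import Mathlib

/-- A square real matrix is a P-matrix if all of its principal minors are positive. -/
def IsPMatrix {n : ℕ} (A : Matrix (Fin n) (Fin n) ℝ) : Prop :=
  ∀ S : Finset (Fin n), S.Nonempty →
    0 < (A.submatrix (fun i : S => (i : Fin n)) (fun j : S => (j : Fin n))).det

/-- A monic real polynomial whose real roots are all `< 1` is positive at `1`. -/
lemma monic_eval_one_pos (p : Polynomial ℝ) (hp : p.Monic)
    (hroots : ∀ x : ℝ, p.IsRoot x → x < 1) : 0 < p.eval 1 := by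
  by_contra hle
  push_neg at hle
  by_cases hd : p.natDegree = 0
  · have : p = 1 := hp.natDegree_eq_zero.mp hd
    simp [this] at hle
    linarith
  · have hdeg : 0 < p.degree := Polynomial.natDegree_pos_iff_degree_pos.mp (Nat.pos_of_ne_zero hd)
    have htop := Polynomial.tendsto_atTop_of_leadingCoeff_nonneg p hdeg
      (by simp [hp.leadingCoeff])
    obtain ⟨b, hb0, hb1⟩ :=
      ((htop.eventually_gt_atTop 0).and (Filter.eventually_ge_atTop (1 : ℝ))).exists
    have hIcc : (0 : ℝ) ∈ Set.Icc (p.eval 1) (p.eval b) := ⟨hle, le_of_lt hb0⟩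
    obtain ⟨x, hx, hx0⟩ := intermediate_value_Icc hb1
      (p.continuous_aeval.continuousOn (s := Set.Icc 1 b)) hIcc
    exact absurd (hroots x hx0) (not_lt.mpr hx.1)

/-- `eval 1` of the characteristic polynomial is `det (1 - A)`. -/
lemma charpoly_eval_one {m : Type*} [Fintype m] [DecidableEq m]
    (A : Matrix m m ℝ) : A.charpoly.eval 1 = (1 - A).det := by
  rw [Matrix.charpoly, eval_det, Matrix.matPolyEquiv_charmatrix]
  simp

/-- If every principal submatrix of J (including J itself) has spectral radius < 1,
then I − J is a P-matrix. -/
theorem one_sub_isPMatrix_of_spectralRadius_lt_one {n : ℕ} (J : Matrix (Fin n) (Fin n) ℝ)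
    (h : ∀ S : Finset (Fin n), S.Nonempty →
      ∀ μ : ℂ, (Matrix.charpoly
        ((J.submatrix (fun i : S => (i : Fin n)) (fun j : S => (j : Fin n))).map
          (Complex.ofReal))).IsRoot μ → ‖μ‖ < 1) :
    IsPMatrix (1 - J) := by
  intro S hS
  set A := J.submatrix (fun i : S => (i : Fin n)) (fun j : S => (j : Fin n)) with hA
  have hsub : (1 - J).submatrix (fun i : S => (i : Fin n)) (fun j : S => (j : Fin n))
      = 1 - A := by
    ext i j
    simp only [hA, Matrix.sub_apply, Matrix.submatrix_apply, Matrix.one_apply, Subtype.ext_iff]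
  rw [hsub, ← charpoly_eval_one]
  apply monic_eval_one_pos _ (A.charpoly_monic)
  intro x hx
  have hroot : ((A.map Complex.ofReal).charpoly).IsRoot (x : ℂ) := by
    have hmap : A.map Complex.ofReal = A.map (Complex.ofRealHom : ℝ →+* ℂ) := rfl
    rw [hmap, Matrix.charpoly_map A Complex.ofRealHom]
    rw [Polynomial.IsRoot, Polynomial.eval_map,
      show ((x : ℂ)) = Complex.ofRealHom x from rfl, Polynomial.eval₂_at_apply,
      show A.charpoly.eval x = 0 from hx, map_zero]
  have := h S hS x hroot
  calc x ≤ |x| := le_abs_self x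
    _ = ‖(x : ℂ)‖ := by rw [Complex.norm_real, Real.norm_eq_abs]
    _ < 1 := this
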